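/- Let d = (d^1,…,d^T) be a demand sequence whose average drift is δ, i.e. Σ_{t=2}^T (1/2)·Σ_i |d^t_i − d^{t−1}_i| = δ·T, and let s be the matching supply sequence s^t = d^t for all t. Then: (a) if ℓ(i,j) = 1 for all i ≠ j, SW(s,d) = (1 − δ)·T, and since every supply sequence s' satisfies SW(s',d) ≤ T, the matching supply sequence is (1 − δ)-competitive; (b) for a general cost function with ℓ(i,j) ≤ ℓ_max for all i, j, SW(s,d) ≥ (1 − δ·ℓ_max)·T, and hence the matching supply sequence is (1 − δ·ℓ_max)-competitive. -/

import Mathlib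

/-- A flow from supply `s` to supply `s'`. -/
def IsFlow {V : Type*} [Fintype V] (f : V → V → ℝ) (s s' : V → ℝ) : Prop :=
  (∀ u v, 0 ≤ f u v) ∧ (∀ u, ∑ v, f u v = s u) ∧ (∀ v, ∑ u, f u v = s' v)

/-- The cost of a flow. -/
def flowCost {V : Type*} [Fintype V] (ℓ f : V → V → ℝ) : ℝ :=
  ∑ u, ∑ v, f u v * ℓ u v

/-- The earthmover distance: the minimum (infimum) cost of a flow from `s` to `s'`. -/
noncomputable def emd {V : Type*} [Fintype V] (ℓ : V → V → ℝ) (s s' : V → ℝ) : ℝ :=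
  sInf {c : ℝ | ∃ f, IsFlow f s s' ∧ flowCost ℓ f = c}

/-- Social welfare of a supply sequence `s` for a demand sequence `d` over times `1..T`:
total demand served minus total movement cost. -/
noncomputable def SW {V : Type*} [Fintype V] (ℓ : V → V → ℝ)
    (s d : ℕ → V → ℝ) (T : ℕ) : ℝ :=
  (∑ t ∈ Finset.Icc 1 T, ∑ i, min (s t i) (d t i))
    - ∑ t ∈ Finset.Icc 2 T, emd ℓ (s (t - 1)) (s t)

lemma min_add_max_sub (x y : ℝ) : min x y + max (x - y) 0 = x := by
  rcases le_total x y with h | h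
  · rw [min_eq_left h, max_eq_right (by linarith : x - y ≤ 0)]; ring
  · rw [min_eq_right h, max_eq_left (by linarith : 0 ≤ x - y)]; ring

lemma abs_eq_max_add (x y : ℝ) : |y - x| = max (x - y) 0 + max (y - x) 0 := by
  rcases le_total x y with h | h
  · rw [abs_of_nonneg (by linarith), max_eq_right (by linarith : x - y ≤ 0),
      max_eq_left (by linarith : (0:ℝ) ≤ y - x)]; ring
  · rw [abs_of_nonpos (by linarith), max_eq_left (by linarith : (0:ℝ) ≤ x - y),
      max_eq_right (by linarith : y - x ≤ 0)]; ring

lemma max_mul_max_eq_zero (x : ℝ) : max x 0 * max (-x) 0 = 0 := by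
  rcases le_total x 0 with h | h
  · rw [max_eq_right h]; ring
  · rw [max_eq_right (by linarith : -x ≤ 0)]; ring

section

variable {k : ℕ} (s s' : Fin k → ℝ)

lemma sum_b_eq_sum_a (hsum : ∑ i, s i = ∑ i, s' i) :
    ∑ i, max (s' i - s i) 0 = ∑ i, max (s i - s' i) 0 := by
  have h : ∀ i, max (s i - s' i) 0 - max (s' i - s i) 0 = s i - s' i := by
    intro i
    rcases le_total (s i) (s' i) with h | h
    · rw [max_eq_right (by linarith : s i - s' i ≤ 0),
        max_eq_left (by linarith : (0:ℝ) ≤ s' i - s i)]; ring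
    · rw [max_eq_left (by linarith : (0:ℝ) ≤ s i - s' i),
        max_eq_right (by linarith : s' i - s i ≤ 0)]; ring
  have := Finset.sum_congr rfl (fun i (_ : i ∈ Finset.univ) => h i)
  rw [Finset.sum_sub_distrib, Finset.sum_sub_distrib] at this
  linarith

lemma sum_abs_eq_two_D (hsum : ∑ i, s i = ∑ i, s' i) :
    ∑ i, |s' i - s i| = 2 * ∑ i, max (s i - s' i) 0 := by
  have h : ∀ i ∈ Finset.univ, |s' i - s i| = max (s i - s' i) 0 + max (s' i - s i) 0 :=
    fun i _ => abs_eq_max_add (s i) (s' i)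
  rw [Finset.sum_congr rfl h, Finset.sum_add_distrib, sum_b_eq_sum_a s s' hsum]; ring

lemma exists_good_flow (ℓ : Fin k → Fin k → ℝ) (hl0 : ∀ i, ℓ i i = 0)
    (hs : ∀ i, 0 ≤ s i) (hs' : ∀ i, 0 ≤ s' i)
    (hsum : ∑ i, s i = ∑ i, s' i) :
    ∃ f, IsFlow f s s' ∧
      flowCost ℓ f = ∑ i, ∑ j,
        (max (s i - s' i) 0 * max (s' j - s j) 0 / (∑ m, max (s m - s' m) 0)) * ℓ i j := by
  set a : Fin k → ℝ := fun i => max (s i - s' i) 0 with ha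
  set b : Fin k → ℝ := fun j => max (s' j - s j) 0 with hb
  set D : ℝ := ∑ m, a m with hD
  have hbD : ∑ m, b m = D := sum_b_eq_sum_a s s' hsum
  have hann : ∀ i, 0 ≤ a i := fun i => le_max_right _ _
  have hbnn : ∀ i, 0 ≤ b i := fun i => le_max_right _ _
  have hDnn : 0 ≤ D := Finset.sum_nonneg fun i _ => hann i
  have hazero : D = 0 → ∀ i, a i = 0 := by
    intro h i
    exact (Finset.sum_eq_zero_iff_of_nonneg (fun i _ => hann i)).mp h i (Finset.mem_univ i)
  have hbzero : D = 0 → ∀ i, b i = 0 := by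
    intro h i
    exact (Finset.sum_eq_zero_iff_of_nonneg (fun i _ => hbnn i)).mp (hbD.trans h) i (Finset.mem_univ i)
  refine ⟨fun i j => (if i = j then min (s i) (s' i) else 0) + a i * (b j / D), ⟨?_, ?_, ?_⟩, ?_⟩
  · intro u v
    have : 0 ≤ a u * (b v / D) := mul_nonneg (hann u) (div_nonneg (hbnn v) hDnn)
    rcases eq_or_ne u v with h | h
    · subst h; simp only [if_pos rfl]; exact add_nonneg (le_min (hs u) (hs' u)) this
    · simp only [if_neg h, zero_add]; exact this
  · intro u
    rw [Finset.sum_add_distrib]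
    have h1 : ∑ v, (if u = v then min (s u) (s' u) else 0) = min (s u) (s' u) := by
      simp
    have h2 : ∑ v, a u * (b v / D) = a u * (D / D) := by
      rw [← Finset.mul_sum, ← Finset.sum_div, hbD]
    rw [h1, h2]
    rcases eq_or_ne D 0 with hD0 | hD0
    · have h4 : a u = 0 := hazero hD0 u
      have h5 : a u = max (s u - s' u) 0 := rfl
      have h3 := min_add_max_sub (s u) (s' u)
      rw [h4, zero_mul, add_zero]
      linarith
    · rw [div_self hD0, mul_one]
      exact min_add_max_sub (s u) (s' u)
  · intro v
    rw [Finset.sum_add_distrib]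
    have h1 : ∑ u, (if u = v then min (s u) (s' u) else 0) = min (s v) (s' v) := by
      simp
    have h2 : ∑ u, a u * (b v / D) = D * (b v / D) := by
      rw [← Finset.sum_mul]
    rw [h1, h2]
    have hmin : min (s v) (s' v) + b v = s' v := by
      have := min_add_max_sub (s' v) (s v)
      rw [min_comm] at this; exact this
    rcases eq_or_ne D 0 with hD0 | hD0
    · have h4 : b v = 0 := hbzero hD0 v
      rw [hD0, zero_mul, add_zero]
      linarith
    · rw [show D * (b v / D) = b v by field_simp]
      exact hmin
  · unfold flowCost
    refine Finset.sum_congr rfl fun i _ => Finset.sum_congr rfl fun j _ => ?_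
    rcases eq_or_ne i j with h | h
    · subst h; simp [hl0 i]
    · simp [h, mul_div_assoc]; exact Or.inl rfl

lemma flowCost_nonneg (ℓ f : Fin k → Fin k → ℝ) (hlnn : ∀ i j, 0 ≤ ℓ i j)
    (hf : ∀ u v, 0 ≤ f u v) : 0 ≤ flowCost ℓ f :=
  Finset.sum_nonneg fun u _ => Finset.sum_nonneg fun v _ => mul_nonneg (hf u v) (hlnn u v)

lemma emd_bddBelow (ℓ : Fin k → Fin k → ℝ) (hlnn : ∀ i j, 0 ≤ ℓ i j) :
    BddBelow {c : ℝ | ∃ f, IsFlow f s s' ∧ flowCost ℓ f = c} :=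
  ⟨0, by rintro c ⟨f, hf, rfl⟩; exact flowCost_nonneg ℓ f hlnn hf.1⟩

lemma emd_nonneg (ℓ : Fin k → Fin k → ℝ) (hlnn : ∀ i j, 0 ≤ ℓ i j) :
    0 ≤ emd ℓ s s' :=
  Real.sInf_nonneg (by rintro c ⟨f, hf, rfl⟩; exact flowCost_nonneg ℓ f hlnn hf.1)

lemma double_sum_abD (hsum : ∑ i, s i = ∑ i, s' i) (c : ℝ) :
    ∑ i, ∑ j, (max (s i - s' i) 0 * max (s' j - s j) 0 / (∑ m, max (s m - s' m) 0)) * c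
      = c * ((1/2) * ∑ i, |s' i - s i|) := by
  set a : Fin k → ℝ := fun i => max (s i - s' i) 0 with ha
  set b : Fin k → ℝ := fun j => max (s' j - s j) 0 with hb
  set D : ℝ := ∑ m, a m with hD
  have hbD : ∑ m, b m = D := sum_b_eq_sum_a s s' hsum
  have habs : ∑ i, |s' i - s i| = 2 * D := sum_abs_eq_two_D s s' hsum
  have h1 : ∀ i, ∑ j, (a i * b j / D) * c = (a i * c / D) * D := by
    intro i
    calc ∑ j, (a i * b j / D) * c = ∑ j, (a i * c / D) * b j :=
          Finset.sum_congr rfl fun j _ => by ring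
      _ = (a i * c / D) * D := by rw [← Finset.mul_sum, hbD]
  rw [Finset.sum_congr rfl fun i (_ : i ∈ Finset.univ) => h1 i]
  have h2 : ∑ i, (a i * c / D) * D = D * (c / D * D) := by
    calc ∑ i, (a i * c / D) * D = ∑ i, a i * (c / D * D) :=
          Finset.sum_congr rfl fun i _ => by ring
      _ = D * (c / D * D) := by rw [← Finset.sum_mul]
  rw [h2, habs]
  rcases eq_or_ne D 0 with h | h
  · rw [h]; ring
  · rw [div_mul_cancel₀ c h]; ring

lemma emd_le_drift (ℓ : Fin k → Fin k → ℝ) (hl0 : ∀ i, ℓ i i = 0)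
    (hlnn : ∀ i j, 0 ≤ ℓ i j) (lmax : ℝ) (hlle : ∀ i j, ℓ i j ≤ lmax)
    (hs : ∀ i, 0 ≤ s i) (hs' : ∀ i, 0 ≤ s' i)
    (hsum : ∑ i, s i = ∑ i, s' i) :
    emd ℓ s s' ≤ lmax * ((1/2) * ∑ i, |s' i - s i|) := by
  obtain ⟨f, hf, hc⟩ := exists_good_flow s s' ℓ hl0 hs hs' hsum
  have h1 : flowCost ℓ f ≤ lmax * ((1/2) * ∑ i, |s' i - s i|) := by
    rw [hc, ← double_sum_abD s s' hsum lmax]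
    refine Finset.sum_le_sum fun i _ => Finset.sum_le_sum fun j _ => ?_
    exact mul_le_mul_of_nonneg_left (hlle i j)
      (div_nonneg (mul_nonneg (le_max_right _ _) (le_max_right _ _))
        (Finset.sum_nonneg fun m _ => le_max_right _ _))
  exact le_trans (csInf_le (emd_bddBelow s s' ℓ hlnn) ⟨f, hf, rfl⟩) h1

lemma flowCost_ge_D (ℓ : Fin k → Fin k → ℝ) (hl0 : ∀ i, ℓ i i = 0)
    (hunit : ∀ i j, i ≠ j → ℓ i j = 1)
    (f : Fin k → Fin k → ℝ) (hf : IsFlow f s s') :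
    ∑ i, max (s i - s' i) 0 ≤ flowCost ℓ f := by
  obtain ⟨hfnn, hrow, hcol⟩ := hf
  have h1 : ∀ u, s u - min (s u) (s' u) ≤ ∑ v, f u v * ℓ u v := by
    intro u
    have hdiag1 : f u u ≤ s u := by
      rw [← hrow u]; exact Finset.single_le_sum (fun v _ => hfnn u v) (Finset.mem_univ u)
    have hdiag2 : f u u ≤ s' u := by
      rw [← hcol u]; exact Finset.single_le_sum (fun v _ => hfnn v u) (Finset.mem_univ u)
    have hdm : f u u ≤ min (s u) (s' u) := le_min hdiag1 hdiag2
    have h2 : ∀ v, f u v - (if v = u then f u v else 0) ≤ f u v * ℓ u v := by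
      intro v
      rcases eq_or_ne v u with h | h
      · subst h; simp [hl0]
      · simp only [if_neg h, sub_zero, hunit u v (Ne.symm h), mul_one]; exact le_refl _
    calc s u - min (s u) (s' u) ≤ s u - f u u := by linarith
      _ = ∑ v, (f u v - (if v = u then f u v else 0)) := by
          rw [Finset.sum_sub_distrib, hrow u]
          simp
      _ ≤ ∑ v, f u v * ℓ u v := Finset.sum_le_sum fun v _ => h2 v
  have hpt : ∀ u, max (s u - s' u) 0 = s u - min (s u) (s' u) := by
    intro u; have := min_add_max_sub (s u) (s' u); linarith
  calc ∑ i, max (s i - s' i) 0 = ∑ i, (s i - min (s i) (s' i)) :=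
        Finset.sum_congr rfl fun i _ => hpt i
    _ ≤ ∑ u, ∑ v, f u v * ℓ u v := Finset.sum_le_sum fun u _ => h1 u

lemma emd_unit_eq (ℓ : Fin k → Fin k → ℝ) (hl0 : ∀ i, ℓ i i = 0)
    (hlnn : ∀ i j, 0 ≤ ℓ i j) (hunit : ∀ i j, i ≠ j → ℓ i j = 1)
    (hs : ∀ i, 0 ≤ s i) (hs' : ∀ i, 0 ≤ s' i)
    (hsum : ∑ i, s i = ∑ i, s' i) :
    emd ℓ s s' = (1/2) * ∑ i, |s' i - s i| := by
  obtain ⟨f, hf, hc⟩ := exists_good_flow s s' ℓ hl0 hs hs' hsum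
  have habs : ∑ i, |s' i - s i| = 2 * ∑ i, max (s i - s' i) 0 := sum_abs_eq_two_D s s' hsum
  have hcost : flowCost ℓ f = (1/2) * ∑ i, |s' i - s i| := by
    rw [hc]
    have hpt : ∀ i j, (max (s i - s' i) 0 * max (s' j - s j) 0 / (∑ m, max (s m - s' m) 0)) * ℓ i j
        = (max (s i - s' i) 0 * max (s' j - s j) 0 / (∑ m, max (s m - s' m) 0)) * 1 := by
      intro i j
      rcases eq_or_ne i j with h | h
      · subst h
        have hz : max (s i - s' i) 0 * max (s' i - s i) 0 = 0 := by
          have := max_mul_max_eq_zero (s i - s' i)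
          rwa [neg_sub] at this
        rw [hz]; simp
      · rw [hunit i j h]
    calc ∑ i, ∑ j, (max (s i - s' i) 0 * max (s' j - s j) 0 / (∑ m, max (s m - s' m) 0)) * ℓ i j
        = ∑ i, ∑ j, (max (s i - s' i) 0 * max (s' j - s j) 0 / (∑ m, max (s m - s' m) 0)) * 1 :=
          Finset.sum_congr rfl fun i _ => Finset.sum_congr rfl fun j _ => hpt i j
      _ = 1 * ((1/2) * ∑ i, |s' i - s i|) := double_sum_abD s s' hsum 1
      _ = (1/2) * ∑ i, |s' i - s i| := one_mul _
  apply le_antisymm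
  · rw [← hcost]
    exact csInf_le (emd_bddBelow s s' ℓ hlnn) ⟨f, hf, rfl⟩
  · have hmem : flowCost ℓ f ∈ {c : ℝ | ∃ f, IsFlow f s s' ∧ flowCost ℓ f = c} := ⟨f, hf, rfl⟩
    apply le_csInf ⟨flowCost ℓ f, hmem⟩
    rintro c ⟨g, hg, rfl⟩
    have := flowCost_ge_D s s' ℓ hl0 hunit g hg
    linarith

end

/-- Theorem `thm:restriced drift`: let `d` be a demand sequence with average
drift `δ`, i.e. `Σ_{t=2}^T (1/2)·Σ_i |d^t_i − d^{t−1}_i| = δ·T`, and consider the matching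
supply sequence `s^t = d^t`.  (a) If `ℓ(i,j) = 1` for `i ≠ j` then `SW(d,d) = (1−δ)·T`,
and every supply sequence has social welfare at most `T`, so matching is
`(1−δ)`-competitive.  (b) For general costs bounded by `ℓ_max`,
`SW(d,d) ≥ (1 − δ·ℓ_max)·T`, and every supply sequence has social welfare at most `T`, so
matching is `(1 − δ·ℓ_max)`-competitive. -/
theorem stmt19 {k T : ℕ} (hk : 1 ≤ k) (hT : 1 ≤ T)
    (ℓ : Fin k → Fin k → ℝ)
    (hl0 : ∀ i, ℓ i i = 0) (hlsymm : ∀ i j, ℓ i j = ℓ j i)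
    (hlnn : ∀ i j, 0 ≤ ℓ i j) (hltri : ∀ i j m, ℓ i m ≤ ℓ i j + ℓ j m)
    (d : ℕ → Fin k → ℝ)
    (hd : ∀ t ∈ Finset.Icc 1 T, (∀ i, 0 ≤ d t i) ∧ ∑ i, d t i = 1)
    (δ : ℝ)
    (hδ : ∑ t ∈ Finset.Icc 2 T, (1 / 2) * ∑ i, |d t i - d (t - 1) i| = δ * T) :
    ((∀ i j, i ≠ j → ℓ i j = 1) →
      SW ℓ d d T = (1 - δ) * T ∧
      ∀ s : ℕ → Fin k → ℝ,
        (∀ t ∈ Finset.Icc 1 T, (∀ i, 0 ≤ s t i) ∧ ∑ i, s t i = 1) →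
        SW ℓ s d T ≤ T) ∧
    (∀ lmax : ℝ, (∀ i j, ℓ i j ≤ lmax) →
      (1 - δ * lmax) * T ≤ SW ℓ d d T ∧
      ∀ s : ℕ → Fin k → ℝ,
        (∀ t ∈ Finset.Icc 1 T, (∀ i, 0 ≤ s t i) ∧ ∑ i, s t i = 1) →
        SW ℓ s d T ≤ T) := by
  have hub : ∀ s : ℕ → Fin k → ℝ,
      (∀ t ∈ Finset.Icc 1 T, (∀ i, 0 ≤ s t i) ∧ ∑ i, s t i = 1) →
      SW ℓ s d T ≤ T := by
    intro s hs
    unfold SW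
    have h1 : ∑ t ∈ Finset.Icc 1 T, ∑ i, min (s t i) (d t i) ≤ (T : ℝ) := by
      have hle : ∀ t ∈ Finset.Icc 1 T, ∑ i, min (s t i) (d t i) ≤ 1 := by
        intro t ht
        calc ∑ i, min (s t i) (d t i) ≤ ∑ i, d t i :=
              Finset.sum_le_sum fun i _ => min_le_right _ _
          _ = 1 := (hd t ht).2
      calc ∑ t ∈ Finset.Icc 1 T, ∑ i, min (s t i) (d t i)
          ≤ ∑ t ∈ Finset.Icc 1 T, (1:ℝ) := Finset.sum_le_sum hle
        _ = (T:ℝ) := by simp [Nat.card_Icc]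
    have h2 : 0 ≤ ∑ t ∈ Finset.Icc 2 T, emd ℓ (s (t-1)) (s t) :=
      Finset.sum_nonneg fun t _ => emd_nonneg _ _ ℓ hlnn
    linarith
  have hmem : ∀ t ∈ Finset.Icc 2 T, t ∈ Finset.Icc 1 T ∧ t - 1 ∈ Finset.Icc 1 T := by
    intro t ht
    simp only [Finset.mem_Icc] at ht ⊢
    omega
  have hdsum : ∀ t ∈ Finset.Icc 2 T, ∑ i, d (t-1) i = ∑ i, d t i := by
    intro t ht
    rw [(hd _ (hmem t ht).2).2, (hd _ (hmem t ht).1).2]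
  have hserved : ∑ t ∈ Finset.Icc 1 T, ∑ i, min (d t i) (d t i) = (T:ℝ) := by
    have hone : ∀ t ∈ Finset.Icc 1 T, ∑ i, min (d t i) (d t i) = 1 := by
      intro t ht; simp only [min_self]; exact (hd t ht).2
    rw [Finset.sum_congr rfl hone]; simp [Nat.card_Icc]
  constructor
  · intro hunit
    refine ⟨?_, hub⟩
    unfold SW
    have h3 : ∑ t ∈ Finset.Icc 2 T, emd ℓ (d (t-1)) (d t) = δ * T := by
      rw [← hδ]
      refine Finset.sum_congr rfl fun t ht => ?_
      exact emd_unit_eq (d (t-1)) (d t) ℓ hl0 hlnn hunit (hd _ (hmem t ht).2).1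
        (hd _ (hmem t ht).1).1 (hdsum t ht)
    rw [hserved, h3]; ring
  · intro lmax hlle
    refine ⟨?_, hub⟩
    have hlmax : 0 ≤ lmax := le_trans (hlnn ⟨0, hk⟩ ⟨0, hk⟩) (hlle _ _)
    unfold SW
    rw [hserved]
    have h3 : ∑ t ∈ Finset.Icc 2 T, emd ℓ (d (t-1)) (d t) ≤ lmax * (δ * T) := by
      calc ∑ t ∈ Finset.Icc 2 T, emd ℓ (d (t-1)) (d t)
          ≤ ∑ t ∈ Finset.Icc 2 T, lmax * ((1/2) * ∑ i, |d t i - d (t-1) i|) :=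
            Finset.sum_le_sum fun t ht =>
              emd_le_drift (d (t-1)) (d t) ℓ hl0 hlnn lmax hlle (hd _ (hmem t ht).2).1
                (hd _ (hmem t ht).1).1 (hdsum t ht)
        _ = lmax * (δ * T) := by rw [← Finset.mul_sum, hδ]
    have hr : (1 - δ * lmax) * (T:ℝ) = T - lmax * (δ * T) := by ring
    linarith
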